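/- Let S be a (σ,δ)-free skew extension of R generated by x₁,…,xₙ. Given any R-ring A and elements a₁,…,aₙ ∈ A satisfying r·a_j = Σᵢ aᵢσ_{ij}(r) + δ_j(r) for all j and r ∈ R, there exists a unique R-ring homomorphism φ: S → A with φ(xᵢ) = aᵢ for all i. -/

import Mathlib

/-- `δ : R → Rⁿ` is a right `σ`-derivation: additive and
`δ(rs) = δ(r)σ(s) + rδ(s)` (row-by-matrix multiplication componentwise). -/
def IsRightSigmaDeriv {R : Type} [Ring R] {n : ℕ}
    (σ : R →+* Matrix (Fin n) (Fin n) R) (δ : R → Fin n → R) : Prop :=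
  (∀ r s : R, δ (r + s) = δ r + δ s) ∧
  ∀ (r s : R) (j : Fin n), δ (r * s) j = (∑ i, δ r i * σ s i j) + r * δ s j

/-- `S` (an `R`-ring via `lam`) together with `x₁,…,xₙ` is a `(σ,δ)`-free skew
extension of `R`: the multiplicative submonoid generated by the `xᵢ` is free on them
(the induced monoid homomorphism from the free monoid on `n` letters is injective),
`S` is a free right `R`-module with basis the set of monomials in the `xᵢ`
(every element of `S` is uniquely a finite sum `Σ_w w·a_w`), and the commutation
rule `r·x_j = Σᵢ xᵢσ_{ij}(r) + δ_j(r)` holds. -/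
def IsSkewFreeExt {R : Type} [Ring R] {n : ℕ}
    (σ : R →+* Matrix (Fin n) (Fin n) R) (δ : R → Fin n → R)
    (S : Type) [Ring S] (lam : R →+* S) (x : Fin n → S) : Prop :=
  Function.Injective (FreeMonoid.lift x) ∧
  Function.Bijective (fun c : FreeMonoid (Fin n) →₀ R =>
    c.sum fun w a => FreeMonoid.lift x w * lam a) ∧
  ∀ (r : R) (j : Fin n), lam r * x j = (∑ i, x i * lam (σ r i j)) + lam (δ r j)

/-- Universal property of the `(σ,δ)`-free skew extension: given an `R`-ring `A`
and elements `a₁,…,aₙ` of `A` satisfying `r·a_j = Σᵢ aᵢσ_{ij}(r) + δ_j(r)`, there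
is a unique `R`-ring homomorphism `φ : S → A` with `φ(xᵢ) = aᵢ`. -/
theorem skewFreeExt_universal {R : Type} [Ring R] {n : ℕ}
    (σ : R →+* Matrix (Fin n) (Fin n) R) (δ : R → Fin n → R)
    (hδ : IsRightSigmaDeriv σ δ)
    (S : Type) [Ring S] (lam : R →+* S) (x : Fin n → S)
    (hS : IsSkewFreeExt σ δ S lam x)
    (A : Type) [Ring A] (lamA : R →+* A) (a : Fin n → A)
    (ha : ∀ (r : R) (j : Fin n),
      lamA r * a j = (∑ i, a i * lamA (σ r i j)) + lamA (δ r j)) :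
    ∃! φ : S →+* A, φ.comp lam = lamA ∧ ∀ i, φ (x i) = a i := by
  obtain ⟨-, hbij, hcomm⟩ := hS
  -- The additive isomorphism from finitely supported functions to S
  have mzS : ∀ w : FreeMonoid (Fin n), FreeMonoid.lift x w * lam (0 : R) = 0 :=
    fun w => by simp
  have maS : ∀ (w : FreeMonoid (Fin n)) (r s : R),
      FreeMonoid.lift x w * lam (r + s)
        = FreeMonoid.lift x w * lam r + FreeMonoid.lift x w * lam s :=
    fun w r s => by simp [mul_add]
  let E : (FreeMonoid (Fin n) →₀ R) →+ S :=
    { toFun := fun c => c.sum fun w r => FreeMonoid.lift x w * lam r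
      map_zero' := Finsupp.sum_zero_index
      map_add' := fun c d => by
        show ((c + d).sum fun w r => FreeMonoid.lift x w * lam r) = _
        rw [Finsupp.sum_add_index' mzS maS] }
  have hEbij : Function.Bijective ⇑E := hbij
  let e : (FreeMonoid (Fin n) →₀ R) ≃+ S := AddEquiv.ofBijective E hEbij
  have he : ∀ c, e c = c.sum fun w r => FreeMonoid.lift x w * lam r := fun c => rfl
  have he_single : ∀ (w : FreeMonoid (Fin n)) (r : R),
      e (Finsupp.single w r) = FreeMonoid.lift x w * lam r := by
    intro w r
    rw [he, Finsupp.sum_single_index (by simp)]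
  -- The additive map to A
  have mzA : ∀ w : FreeMonoid (Fin n), FreeMonoid.lift a w * lamA (0 : R) = 0 :=
    fun w => by simp
  have maA : ∀ (w : FreeMonoid (Fin n)) (r s : R),
      FreeMonoid.lift a w * lamA (r + s)
        = FreeMonoid.lift a w * lamA r + FreeMonoid.lift a w * lamA s :=
    fun w r s => by simp [mul_add]
  let F : (FreeMonoid (Fin n) →₀ R) →+ A :=
    { toFun := fun c => c.sum fun w r => FreeMonoid.lift a w * lamA r
      map_zero' := Finsupp.sum_zero_index
      map_add' := fun c d => by
        show ((c + d).sum fun w r => FreeMonoid.lift a w * lamA r) = _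
        rw [Finsupp.sum_add_index' mzA maA] }
  let ψ : S →+ A := F.comp e.symm.toAddMonoidHom
  have hψ : ∀ (w : FreeMonoid (Fin n)) (r : R),
      ψ (FreeMonoid.lift x w * lam r) = FreeMonoid.lift a w * lamA r := by
    intro w r
    have : FreeMonoid.lift x w * lam r = e (Finsupp.single w r) := (he_single w r).symm
    rw [this]
    show F (e.symm (e (Finsupp.single w r))) = _
    rw [e.symm_apply_apply]
    show (Finsupp.single w r).sum (fun w r => FreeMonoid.lift a w * lamA r) = _
    rw [Finsupp.sum_single_index (by simp)]
  -- induction principle over S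
  have key : ∀ (p : S → Prop), p 0 →
      (∀ (w : FreeMonoid (Fin n)) (r : R) (s : S), p s →
        p (FreeMonoid.lift x w * lam r + s)) → ∀ s, p s := by
    intro p h0 hstep s
    obtain ⟨c, rfl⟩ := e.surjective s
    induction c using Finsupp.induction with
    | zero => simpa using h0
    | single_add w r c _ _ ih =>
      rw [map_add, he_single]
      exact hstep w r _ ih
  -- ψ of right multiplication by lam r
  have hmulR : ∀ s (r : R), ψ (s * lam r) = ψ s * lamA r := by
    refine key (fun s => ∀ r, ψ (s * lam r) = ψ s * lamA r) (by simp) ?_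
    intro w r' s ih r
    rw [add_mul, map_add, mul_assoc, ← map_mul, hψ, map_add, hψ, ih, map_mul,
      add_mul, mul_assoc]
  -- ψ of right multiplication by x j
  have hmulX : ∀ s (j : Fin n), ψ (s * x j) = ψ s * a j := by
    refine key (fun s => ∀ j, ψ (s * x j) = ψ s * a j) (by simp) ?_
    intro w r s ih j
    have hx : FreeMonoid.lift x w * lam r * x j =
        (∑ i, FreeMonoid.lift x (w * FreeMonoid.of i) * lam (σ r i j))
          + FreeMonoid.lift x w * lam (δ r j) := by
      rw [mul_assoc, hcomm, mul_add, Finset.mul_sum]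
      congr 1
      refine Finset.sum_congr rfl fun i _ => ?_
      rw [map_mul, FreeMonoid.lift_eval_of, mul_assoc]
    rw [add_mul, map_add, hx, map_add, map_sum, map_add, hψ, ih, hψ, add_mul]
    congr 1
    have hterm : ∀ i : Fin n, ψ (FreeMonoid.lift x (w * FreeMonoid.of i) * lam (σ r i j))
        = FreeMonoid.lift a w * (a i * lamA (σ r i j)) := by
      intro i
      rw [hψ, map_mul, FreeMonoid.lift_eval_of, mul_assoc]
    simp only [hterm]
    rw [← Finset.mul_sum, ← mul_add, ← ha, ← mul_assoc]
  -- ψ of right multiplication by lift x w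
  have hmulW : ∀ (w : FreeMonoid (Fin n)) (s : S),
      ψ (s * FreeMonoid.lift x w) = ψ s * FreeMonoid.lift a w := by
    intro w
    induction w using FreeMonoid.inductionOn' with
    | one => intro s; simp
    | of_mul i w ih =>
      intro s
      have hxw : FreeMonoid.lift x (FreeMonoid.of i * w) = x i * FreeMonoid.lift x w := by
        rw [map_mul, FreeMonoid.lift_eval_of]
      have haw : FreeMonoid.lift a (FreeMonoid.of i * w) = a i * FreeMonoid.lift a w := by
        rw [map_mul, FreeMonoid.lift_eval_of]
      rw [hxw, haw, ← mul_assoc, ih, hmulX, mul_assoc]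
  -- ψ is multiplicative
  have hmul : ∀ t s, ψ (s * t) = ψ s * ψ t := by
    refine key (fun t => ∀ s, ψ (s * t) = ψ s * ψ t) (by simp) ?_
    intro w r t ih s
    rw [mul_add, map_add, map_add, hψ, ← mul_assoc, hmulR, hmulW, ih, mul_add,
      mul_assoc]
  have hone : ψ 1 = 1 := by
    have h1 : (1 : S) = FreeMonoid.lift x 1 * lam 1 := by simp
    rw [h1, hψ]; simp
  -- assemble the ring hom
  let φ : S →+* A :=
    { toFun := ψ
      map_one' := hone
      map_mul' := fun s t => hmul t s
      map_zero' := ψ.map_zero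
      map_add' := ψ.map_add }
  have hφψ : ∀ s, φ s = ψ s := fun s => rfl
  have hφlam : φ.comp lam = lamA := by
    ext r
    show ψ (lam r) = lamA r
    have h1 : lam r = FreeMonoid.lift x 1 * lam r := by simp
    rw [h1, hψ]; simp
  have hφx : ∀ i, φ (x i) = a i := by
    intro i
    show ψ (x i) = a i
    have h1 : x i = FreeMonoid.lift x (FreeMonoid.of i) * lam 1 := by
      rw [FreeMonoid.lift_eval_of]; simp
    rw [h1, hψ, FreeMonoid.lift_eval_of]; simp
  refine ⟨φ, ⟨hφlam, hφx⟩, ?_⟩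
  rintro φ' ⟨h'lam, h'x⟩
  have h'lam' : ∀ r, φ' (lam r) = lamA r := fun r => DFunLike.congr_fun h'lam r
  have h'W : ∀ w : FreeMonoid (Fin n), φ' (FreeMonoid.lift x w) = FreeMonoid.lift a w := by
    intro w
    induction w using FreeMonoid.inductionOn' with
    | one => simp
    | of_mul i w ih =>
      have hxw : FreeMonoid.lift x (FreeMonoid.of i * w) = x i * FreeMonoid.lift x w := by
        rw [map_mul, FreeMonoid.lift_eval_of]
      have haw : FreeMonoid.lift a (FreeMonoid.of i * w) = a i * FreeMonoid.lift a w := by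
        rw [map_mul, FreeMonoid.lift_eval_of]
      rw [hxw, haw, map_mul, ih, h'x]
  refine RingHom.ext (key (fun s => φ' s = φ s) (by simp) ?_)
  intro w r s ih
  rw [map_add, map_add, map_mul, h'W, h'lam', ih]
  simp only [hφψ]
  rw [hψ]
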